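/- arXiv:1808.01394 — 2 statements merged into one kernel-verified Lean document; each statement's English description precedes it below -/
import Mathlib

section
/- For every n ∈ ℕ and λ ∈ (0,n): if the mechanism C_λ is (ε,δ)-differentially private (with neighboring datasets in {0,1}^n differing in at most one coordinate), then the shuffled bit-sum mechanism Π_{n,λ} is (ε,δ)-differentially private. -/
open scoped ENNReal Classical

noncomputable section

namespace ShuffledDP

universe u v w

lemma half_le_one : (2⁻¹ : ℝ≥0∞) ≤ 1 := by
  simp [ENNReal.inv_le_one]

/-- Independent samples from a finite family of PMFs, collected (in order) as a list. -/
noncomputable def indep {α : Type u} : (n : ℕ) → (Fin n → PMF α) → PMF (List α)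
  | 0, _ => PMF.pure []
  | n + 1, f =>
      (f 0).bind fun y => (indep n fun i => f i.succ).bind fun ys => PMF.pure (y :: ys)

/-- `(ε, δ)`-differential privacy of a mechanism `M` with respect to a
neighboring relation `nbr` on inputs. -/
def DPFor {I : Type u} {Z : Type v} (nbr : I → I → Prop) (M : I → PMF Z) (ε δ : ℝ) : Prop :=
  ∀ x x', nbr x x' → ∀ T : Set Z,
    (M x).toOuterMeasure T ≤
      ENNReal.ofReal (Real.exp ε) * (M x').toOuterMeasure T + ENNReal.ofReal δ

/-- Two datasets are neighbors if they differ in at most one coordinate. -/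
def Neighbor {n : ℕ} {X : Type u} (x x' : Fin n → X) : Prop :=
  ∃ j, ∀ i, i ≠ j → x i = x' i

/-- The randomized-response local randomizer `R_{n,λ}`: output the input bit with
probability `1 - λ/n` and a uniformly random bit with probability `λ/n`. -/
noncomputable def rr (n : ℕ) (lam : ℝ) (x : Bool) : PMF Bool :=
  (PMF.bernoulli (min (Real.toNNReal (lam / n)) 1) (min_le_right _ _)).bind fun b =>
    if b then PMF.bernoulli 2⁻¹ (by norm_num) else PMF.pure x

/-- Binomial distribution, valued in `ℕ`. -/
noncomputable def binom (p : ℝ≥0∞) (h : p ≤ 1) (m : ℕ) : PMF ℕ :=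
  (PMF.binomial p.toNNReal (by simpa using ENNReal.toNNReal_mono ENNReal.one_ne_top h) m).map Fin.val

/-- Uniform distribution over the subsets of `Fin n` of size `s`. -/
noncomputable def uniformSubset (n s : ℕ) : PMF (Finset (Fin n)) :=
  if h : ((Finset.univ : Finset (Fin n)).powersetCard s).Nonempty then
    PMF.uniformOfFinset _ h
  else PMF.pure ∅

/-- `∑_{i ∉ H} x_i` for a boolean dataset `x`. -/
def sumOutside {n : ℕ} (H : Finset (Fin n)) (x : Fin n → Bool) : ℕ :=
  ∑ i ∈ Hᶜ, (if x i then 1 else 0)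

/-- The mechanism `C_H`: output `∑_{i ∉ H} x_i + B` with `B ~ Bin(|H|, 1/2)`. -/
noncomputable def CH (n : ℕ) (H : Finset (Fin n)) (x : Fin n → Bool) : PMF ℕ :=
  (binom 2⁻¹ half_le_one H.card).map fun B => sumOutside H x + B

/-- The mechanism `C_s`: sample `H` uniformly among size-`s` subsets, then run `C_H`. -/
noncomputable def Cs (n s : ℕ) (x : Fin n → Bool) : PMF ℕ :=
  (uniformSubset n s).bind fun H => CH n H x

/-- The mechanism `C_λ`: sample `s ~ Bin(n, λ/n)`, then run `C_s`. -/
noncomputable def Cmech (n : ℕ) (lam : ℝ) (x : Fin n → Bool) : PMF ℕ :=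
  (binom (min (ENNReal.ofReal (lam / n)) 1) (min_le_right _ _) n).bind fun s => Cs n s x

/-- The shuffled bit-sum mechanism `Π_{n,λ}`: the random multiset `{y_1, …, y_n}`
of the outputs `y_i ~ R_{n,λ}(x_i)`. -/
noncomputable def shuffleBit (n : ℕ) (lam : ℝ) (x : Fin n → Bool) : PMF (Multiset Bool) :=
  (indep n fun i => rr n lam (x i)).map fun l => (l : Multiset Bool)

/-- The bit-sum protocol output `P_{n,λ}(x) = (n/(n-λ)) (∑ y_i - λ/2)`. -/
noncomputable def bitSumOutput (n : ℕ) (lam : ℝ) (x : Fin n → Bool) : PMF ℝ :=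
  (indep n fun i => rr n lam (x i)).map fun l =>
    ((n : ℝ) / (n - lam)) * ((l.count true : ℝ) - lam / 2)

/-- The randomized-rounding encoder `E_r`. -/
noncomputable def encoder (r : ℕ) (x : ℝ) : PMF (Fin r → Bool) :=
  (PMF.bernoulli (min (Real.toNNReal (x * r - ⌈x * r⌉ + 1)) 1) (min_le_right _ _)).map
    fun b i => if ((i : ℕ) : ℤ) + 1 < ⌈x * r⌉ then true
      else if ((i : ℕ) : ℤ) + 1 = ⌈x * r⌉ then b else false

/-- The real-sum shuffled mechanism `Π^ℝ_{n,λ,r}`: the random multiset of all `n·r`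
bits `y_{i,j} ~ R_{n,λ}(b_{i,j})` where `(b_{i,1},…,b_{i,r}) = E_r(x_i)`. -/
noncomputable def realShuffle (n : ℕ) (lam : ℝ) (r : ℕ) (X : Fin n → ℝ) :
    PMF (Multiset Bool) :=
  (indep n fun i =>
      (encoder r (X i)).bind fun b =>
        (indep r fun j => rr n lam (b j)).map fun l => (l : Multiset Bool)).map
    fun ms => ms.sum

/-- The real-sum protocol output `z = (1/r)(n/(n-λ)) (∑_{i,j} y_{i,j} - λ r/2)`. -/
noncomputable def realOutput (n : ℕ) (lam : ℝ) (r : ℕ) (X : Fin n → ℝ) : PMF ℝ :=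
  (realShuffle n lam r X).map fun m =>
    (1 / (r : ℝ)) * ((n : ℝ) / (n - lam)) * ((m.count true : ℝ) - lam * r / 2)

/-- The shuffled mechanism associated with a randomizer producing a multiset of
messages: the union (multiset sum) of the `n` users' message multisets. -/
noncomputable def shuffM {𝒳 : Type u} {𝒴 : Type v} (n : ℕ) (R : 𝒳 → PMF (Multiset 𝒴))
    (x : Fin n → 𝒳) : PMF (Multiset 𝒴) :=
  (indep n fun i => R (x i)).map fun l => l.sum

/-- The multiset of the `m` messages output by an `m`-message randomizer. -/
noncomputable def vecR {𝒳 : Type u} {𝒴 : Type v} {m : ℕ} (R : 𝒳 → PMF (Fin m → 𝒴)) :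
    𝒳 → PMF (Multiset 𝒴) :=
  fun a => (R a).map fun v => ((List.ofFn v : List 𝒴) : Multiset 𝒴)

/-- The one-message shuffled mechanism `Π_R`: the random multiset `{R(x_1), …, R(x_n)}`. -/
noncomputable def shuffle1 {𝒳 : Type u} {𝒴 : Type v} (n : ℕ) (R : 𝒳 → PMF 𝒴)
    (x : Fin n → 𝒳) : PMF (Multiset 𝒴) :=
  (indep n fun i => R (x i)).map fun l => (l : Multiset 𝒴)

/-- `(ε, δ)`-differential privacy of a local randomizer (any two inputs are neighbors). -/
def RandDP {𝒳 : Type u} {𝒴 : Type v} (R : 𝒳 → PMF 𝒴) (ε δ : ℝ) : Prop :=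
  ∀ x x' : 𝒳, ∀ T : Set 𝒴,
    (R x).toOuterMeasure T ≤
      ENNReal.ofReal (Real.exp ε) * (R x').toOuterMeasure T + ENNReal.ofReal δ

/-- The output of the local protocol `(R, A)`. -/
noncomputable def localOut {𝒳 : Type u} {𝒴 : Type v} {𝒵 : Type w} (n : ℕ)
    (R : 𝒳 → PMF 𝒴) (A : List 𝒴 → 𝒵) (X : Fin n → 𝒳) : PMF 𝒵 :=
  (indep n fun i => R (X i)).map A

/-- `(a, b)`-accuracy of a protocol `P` for a function `f` w.r.t. a distance `d`. -/
def AccFor {I : Type u} {𝒵 : Type w} (P : I → PMF 𝒵) (f : I → 𝒵) (d : 𝒵 → 𝒵 → ℝ)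
    (a b : ℝ) : Prop :=
  ∀ X, ENNReal.ofReal (1 - b) ≤ (P X).toOuterMeasure {z | d z (f X) ≤ a}


section Aux

variable {p : ℝ≥0∞} (hp : p ≤ 1)

lemma pne (hp : p ≤ 1) : p ≠ ⊤ := ne_top_of_le_ne_top ENNReal.one_ne_top hp

lemma pnn (hp : p ≤ 1) : p.toNNReal ≤ 1 := by
  simpa using ENNReal.toNNReal_mono ENNReal.one_ne_top hp

lemma binom_apply_le {n k : ℕ} (hk : k ≤ n) :
    binom p hp n k = (n.choose k : ℝ≥0∞) * p ^ k * (1 - p) ^ (n - k) := by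
  rw [binom, PMF.map_apply]
  rw [tsum_eq_single (⟨k, Nat.lt_succ_of_le hk⟩ : Fin (n+1)) (by
    intro b hb
    simp only [ne_eq] at hb
    rw [if_neg]
    intro h
    exact hb (by ext; simp [← h]))]
  rw [if_pos rfl, show PMF.binomial p.toNNReal _ n = PMF.binomial p.toNNReal (pnn hp) n from rfl,
    PMF.binomial_apply]
  simp only [Fin.val_mk, Fin.val_last, ENNReal.coe_toNNReal (pne hp)]
  ring

lemma binom_apply_gt {n k : ℕ} (hk : n < k) : binom p hp n k = 0 := by
  rw [binom, PMF.map_apply]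
  refine ENNReal.tsum_eq_zero.2 fun b => ?_
  rw [if_neg]
  exact fun h => absurd (h ▸ b.isLt) (by omega)

lemma binom_zero : binom p hp 0 = PMF.pure 0 := by
  ext k
  rcases Nat.eq_zero_or_pos k with rfl | hk
  · simp [binom_apply_le hp (le_refl 0)]
  · rw [binom_apply_gt hp hk, PMF.pure_apply, if_neg (by omega)]

lemma map_add_apply (q : PMF ℕ) (c k : ℕ) :
    (q.map fun x => c + x) k = if c ≤ k then q (k - c) else 0 := by
  rw [PMF.map_apply]
  split_ifs with h
  · rw [tsum_eq_single (k - c) ?_]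
    · rw [if_pos (by omega)]
    · intro b hb
      rw [if_neg]
      intro hh
      exact hb (by omega)
  · refine ENNReal.tsum_eq_zero.2 fun b => if_neg (fun hh => h (by omega))

lemma binom_succ (m : ℕ) :
    binom p hp (m+1) =
      (PMF.bernoulli p.toNNReal (pnn hp)).bind fun b => (binom p hp m).map fun c => b.toNat + c := by
  ext k
  rw [PMF.bind_apply, tsum_bool]
  simp only [PMF.bernoulli_apply, Bool.cond_false, Bool.cond_true, ENNReal.coe_sub,
    ENNReal.coe_one, ENNReal.coe_toNNReal (pne hp), Bool.toNat_false,
    Bool.toNat_true, map_add_apply, Nat.zero_le, if_true, Nat.sub_zero, Nat.le_zero]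
  rcases Nat.lt_or_ge (m+1) k with hk | hk
  · rw [binom_apply_gt hp hk, binom_apply_gt hp (by omega)]
    split_ifs with h
    · rw [binom_apply_gt hp (by omega)]; simp
    · simp
  · rcases Nat.eq_zero_or_pos k with rfl | hk0
    · rw [if_neg (by omega), binom_apply_le hp (by omega), binom_apply_le hp (by omega)]
      simp only [Nat.choose_zero_right, Nat.sub_zero, Nat.cast_one, one_mul, pow_zero, mul_one,
        mul_zero, add_zero]
      ring
    · rw [if_pos (by omega)]
      obtain ⟨j, rfl⟩ : ∃ j, k = j + 1 := ⟨k - 1, by omega⟩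
      simp only [Nat.add_sub_cancel]
      rcases Nat.lt_or_ge m (j+1) with hkm | hkm
      · have hj : j = m := by omega
        subst hj
        rw [binom_apply_gt hp (n := j) (k := j+1) (by omega),
          binom_apply_le hp (n := j+1) (k := j+1) le_rfl,
          binom_apply_le hp (n := j) (k := j) le_rfl]
        simp only [Nat.choose_self, Nat.sub_self, pow_zero, Nat.cast_one, one_mul, mul_one,
          mul_zero, zero_add]
        ring
      · rw [binom_apply_le hp (by omega), binom_apply_le hp (by omega),
          binom_apply_le hp (by omega)]
        rw [Nat.choose_succ_succ m j]
        rw [show m + 1 - (j+1) = (m - (j+1)) + 1 from by omega,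
          show m - j = (m - (j+1)) + 1 from by omega]
        push_cast
        ring

lemma pmf_map_congr {α : Type u} {β : Type v} (q : PMF α) (f g : α → β)
    (h : ∀ a ∈ q.support, f a = g a) : q.map f = q.map g := by
  ext b
  rw [PMF.map_apply, PMF.map_apply]
  refine tsum_congr fun a => ?_
  by_cases ha : q a = 0
  · simp [ha]
  · rw [h a ha]

lemma indep_length {α : Type u} : ∀ (n : ℕ) (f : Fin n → PMF α) (l : List α),
    l ∈ (indep n f).support → l.length = n
  | 0, f, l, hl => by
    simp only [indep, PMF.support_pure, Set.mem_singleton_iff] at hl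
    simp [hl]
  | n + 1, f, l, hl => by
    simp only [indep, PMF.support_bind, PMF.support_pure, Set.mem_iUnion,
      Set.mem_singleton_iff] at hl
    obtain ⟨y, -, ys, hys, rfl⟩ := hl
    simp [indep_length n _ ys hys]

lemma bool_list_eq (l : List Bool) :
    (l : Multiset Bool) =
      Multiset.replicate (l.count true) true +
        Multiset.replicate (l.length - l.count true) false := by
  induction l with
  | nil => simp
  | cons a l ih =>
    have hc : l.count true ≤ l.length := List.count_le_length
    cases a
    · have h1 : (false :: l).count true = l.count true := by simp [List.count_cons]
      rw [h1, List.length_cons,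
        show l.length + 1 - List.count true l = (l.length - l.count true) + 1 from by omega,
        Multiset.replicate_succ, Multiset.add_cons, ← Multiset.cons_coe, ih]
    · have h1 : (true :: l).count true = l.count true + 1 := by simp [List.count_cons]
      rw [h1, List.length_cons,
        show l.length + 1 - (List.count true l + 1) = l.length - l.count true from by omega,
        Multiset.replicate_succ, Multiset.cons_add, ← Multiset.cons_coe, ih]

lemma hdist_sum (hp : p ≤ 1) (n : ℕ) :
    ∑ H : Finset (Fin n), p ^ H.card * (1 - p) ^ (n - H.card) = 1 := by
  have key := Finset.prod_add (fun _ : Fin n => p) (fun _ : Fin n => 1 - p) Finset.univ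
  simp only [Finset.prod_const, Finset.card_univ, Fintype.card_fin] at key
  have h1 : p + (1 - p) = 1 := by
    rw [add_comm]; exact tsub_add_cancel_of_le hp
  rw [h1, one_pow] at key
  calc ∑ H : Finset (Fin n), p ^ H.card * (1 - p) ^ (n - H.card)
      = ∑ H ∈ Finset.univ.powerset,
          p ^ H.card * (1 - p) ^ ((Finset.univ \ H).card) := by
        rw [Finset.powerset_univ]
        exact Finset.sum_congr rfl fun H _ => by
          rw [Finset.card_sdiff_of_subset (Finset.subset_univ H), Finset.card_univ, Fintype.card_fin]
    _ = 1 := key.symm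

noncomputable def Hdist (n : ℕ) : PMF (Finset (Fin n)) :=
  PMF.ofFintype (fun H => p ^ H.card * (1 - p) ^ (n - H.card)) (hdist_sum hp n)

lemma uniformSubset_apply {n s : ℕ} (hs : s ≤ n) (H : Finset (Fin n)) :
    uniformSubset n s H = if H.card = s then ((n.choose s : ℝ≥0∞))⁻¹ else 0 := by
  have hne : ((Finset.univ : Finset (Fin n)).powersetCard s).Nonempty := by
    rw [Finset.powersetCard_nonempty]
    simpa using hs
  rw [uniformSubset, dif_pos hne, PMF.uniformOfFinset_apply]
  by_cases h : H.card = s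
  · rw [if_pos (Finset.mem_powersetCard_univ.2 h), if_pos h, Finset.card_powersetCard,
      Finset.card_univ, Fintype.card_fin]
  · rw [if_neg (fun hh => h (Finset.mem_powersetCard_univ.1 hh)), if_neg h]

lemma hdist_eq (n : ℕ) :
    (binom p hp n).bind (fun s => uniformSubset n s) = Hdist hp n := by
  ext H
  have hcard : H.card ≤ n := by
    simpa using Finset.card_le_card (Finset.subset_univ H)
  rw [PMF.bind_apply, Hdist, PMF.ofFintype_apply]
  rw [tsum_eq_single H.card ?_]
  · rw [binom_apply_le hp hcard, uniformSubset_apply hcard, if_pos rfl]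
    have h0 : (n.choose H.card : ℝ≥0∞) ≠ 0 := by
      exact_mod_cast Nat.cast_ne_zero.2 (Nat.choose_pos hcard).ne'
    have ht : (n.choose H.card : ℝ≥0∞) ≠ ⊤ := ENNReal.natCast_ne_top _
    calc (n.choose H.card : ℝ≥0∞) * p ^ H.card * (1 - p) ^ (n - H.card) *
          ((n.choose H.card : ℝ≥0∞))⁻¹
        = ((n.choose H.card : ℝ≥0∞) * ((n.choose H.card : ℝ≥0∞))⁻¹) *
            (p ^ H.card * (1 - p) ^ (n - H.card)) := by ring
      _ = p ^ H.card * (1 - p) ^ (n - H.card) := by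
          rw [ENNReal.mul_inv_cancel h0 ht, one_mul]
  · intro s hs
    rcases Nat.lt_or_ge n s with h | h
    · rw [binom_apply_gt hp h, zero_mul]
    · rw [uniformSubset_apply h, if_neg (fun hh => hs hh.symm), mul_zero]

def ext0 {n : ℕ} (b : Bool) (H : Finset (Fin n)) : Finset (Fin (n+1)) :=
  if b then insert 0 (H.map (Fin.succEmb n)) else H.map (Fin.succEmb n)

lemma zero_mem_ext0 {n : ℕ} (b : Bool) (H : Finset (Fin n)) :
    (0 : Fin (n+1)) ∈ ext0 b H ↔ b = true := by
  cases b <;> simp [ext0, Fin.succ_ne_zero, eq_comm]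

lemma succ_mem_ext0 {n : ℕ} (b : Bool) (H : Finset (Fin n)) (i : Fin n) :
    i.succ ∈ ext0 b H ↔ i ∈ H := by
  cases b <;>
    simp [ext0, Fin.succ_ne_zero, Fin.succ_inj, Fin.succEmb]

lemma card_ext0 {n : ℕ} (b : Bool) (H : Finset (Fin n)) :
    (ext0 b H).card = H.card + b.toNat := by
  cases b
  · simp [ext0]
  · rw [ext0, if_pos rfl, Finset.card_insert_of_notMem (by simp [Fin.succ_ne_zero, eq_comm]),
      Finset.card_map]
    simp [add_comm]

lemma ext0_injective {n : ℕ} (b : Bool) : Function.Injective (ext0 (n := n) b) := by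
  intro H K h
  ext i
  rw [← succ_mem_ext0 b H i, ← succ_mem_ext0 b K i, h]

lemma hdist_apply {n : ℕ} (H : Finset (Fin n)) :
    Hdist hp n H = p ^ H.card * (1 - p) ^ (n - H.card) := rfl

def pre0 {n : ℕ} (K : Finset (Fin (n+1))) : Finset (Fin n) :=
  Finset.univ.filter (fun i => i.succ ∈ K)

lemma mem_pre0 {n : ℕ} (K : Finset (Fin (n+1))) (i : Fin n) :
    i ∈ pre0 K ↔ i.succ ∈ K := by simp [pre0]

lemma ext0_pre0 {n : ℕ} (b : Bool) (K : Finset (Fin (n+1)))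
    (hb : ((0 : Fin (n+1)) ∈ K ↔ b = true)) : ext0 b (pre0 K) = K := by
  ext j
  induction j using Fin.cases with
  | zero => rw [zero_mem_ext0, ← hb]
  | succ i => rw [succ_mem_ext0, mem_pre0]

lemma eq_pre0_of_ext0 {n : ℕ} {b : Bool} {K : Finset (Fin (n+1))} {H : Finset (Fin n)}
    (h : K = ext0 b H) : H = pre0 K := by
  ext i
  rw [mem_pre0, h, succ_mem_ext0]

lemma card_pre0 {n : ℕ} (K : Finset (Fin (n+1))) : (pre0 K).card = (K.erase 0).card := by
  have : (pre0 K).map (Fin.succEmb n) = K.erase 0 := by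
    ext j
    induction j using Fin.cases with
    | zero => simp [Fin.succ_ne_zero, Fin.succEmb]
    | succ i =>
      simp [Fin.succ_ne_zero, Fin.succ_inj, Fin.succEmb, mem_pre0]
  rw [← this, Finset.card_map]

lemma hdist_succ (n : ℕ) :
    Hdist hp (n+1) = (PMF.bernoulli p.toNNReal (pnn hp)).bind fun b => (Hdist hp n).map (ext0 b) := by
  ext K
  rw [PMF.bind_apply, tsum_bool, hdist_apply]
  simp only [PMF.bernoulli_apply, Bool.cond_false, Bool.cond_true, ENNReal.coe_sub,
    ENNReal.coe_one, ENNReal.coe_toNNReal (pne hp)]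
  have hKcard : K.card ≤ n + 1 := by
    simpa using Finset.card_le_card (Finset.subset_univ K)
  by_cases h0 : (0 : Fin (n+1)) ∈ K
  · have hfalse : ((Hdist hp n).map (ext0 false)) K = 0 := by
      rw [PMF.map_apply]
      refine ENNReal.tsum_eq_zero.2 fun H => if_neg fun hh => ?_
      rw [hh] at h0
      exact absurd ((zero_mem_ext0 false H).1 h0) (by simp)
    have h1 : (PMF.map (ext0 true) (Hdist hp n)) K = Hdist hp n (pre0 K) := by
      rw [PMF.map_apply]
      refine (tsum_eq_single (pre0 K)
        (fun H hH => if_neg fun hh => hH (eq_pre0_of_ext0 (b := true) hh))).trans ?_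
      rw [if_pos (ext0_pre0 true K (by simp [h0])).symm]
    rw [hfalse, mul_zero, zero_add, h1]
    rw [hdist_apply, card_pre0,
      Finset.card_erase_of_mem h0]
    have hK1 : 1 ≤ K.card := Finset.card_pos.2 ⟨0, h0⟩
    obtain ⟨d, hd⟩ : ∃ d, K.card = d + 1 := ⟨K.card - 1, by omega⟩
    rw [hd, Nat.succ_sub_succ, Nat.add_sub_cancel]
    ring
  · have htrue : ((Hdist hp n).map (ext0 true)) K = 0 := by
      rw [PMF.map_apply]
      refine ENNReal.tsum_eq_zero.2 fun H => if_neg fun hh => ?_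
      exact h0 (hh ▸ (zero_mem_ext0 true H).2 rfl)
    have h1 : (PMF.map (ext0 false) (Hdist hp n)) K = Hdist hp n (pre0 K) := by
      rw [PMF.map_apply]
      refine (tsum_eq_single (pre0 K)
        (fun H hH => if_neg fun hh => hH (eq_pre0_of_ext0 (b := false) hh))).trans ?_
      rw [if_pos (ext0_pre0 false K (by simp [h0])).symm]
    rw [htrue, mul_zero, add_zero, h1]
    rw [hdist_apply, card_pre0,
      Finset.erase_eq_of_notMem h0]
    have hKn : K.card ≤ n := by
      have hsub : K ⊆ Finset.univ.erase 0 := fun j hj =>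
        Finset.mem_erase.2 ⟨fun hz => h0 (hz ▸ hj), Finset.mem_univ j⟩
      have := Finset.card_le_card hsub
      rwa [Finset.card_erase_of_mem (Finset.mem_univ _), Finset.card_univ,
        Fintype.card_fin, Nat.add_sub_cancel] at this
    rw [show n + 1 - K.card = (n - K.card) + 1 from by omega]
    ring

lemma sumOutside_ext0 {n : ℕ} (b : Bool) (H : Finset (Fin n)) (x : Fin (n+1) → Bool) :
    sumOutside (ext0 b H) x =
      (if b then 0 else if x 0 then 1 else 0) + sumOutside H (fun i => x i.succ) := by
  rw [sumOutside, sumOutside, ← Finset.univ_inter ((ext0 b H)ᶜ), ← Finset.sum_ite_mem,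
    Fin.sum_univ_succ]
  congr 1
  · cases b <;> simp [Finset.mem_compl, zero_mem_ext0]
  · rw [← Finset.univ_inter (Hᶜ), ← Finset.sum_ite_mem]
    refine Finset.sum_congr rfl fun i _ => ?_
    simp only [Finset.mem_compl, succ_mem_ext0]

lemma CH_ext0 {n : ℕ} (b : Bool) (H : Finset (Fin n)) (x : Fin (n+1) → Bool) :
    CH (n+1) (ext0 b H) x =
      ((if b then PMF.bernoulli 2⁻¹ (by norm_num) else PMF.pure (x 0)) : PMF Bool).bind
        fun y => (CH n H (fun i => x i.succ)).map fun c => y.toNat + c := by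
  cases b
  · simp only [if_neg (Bool.false_ne_true), PMF.pure_bind]
    rw [CH, CH, card_ext0, sumOutside_ext0]
    simp only [Bool.toNat_false, Nat.add_zero, if_neg (Bool.false_ne_true), PMF.map_comp]
    refine congrArg _ (funext fun B => ?_)
    simp only [Function.comp_apply]
    cases hx : x 0 <;> simp [hx] <;> exact congrArg PMF.pure (by omega)
  · rw [CH, CH, card_ext0, sumOutside_ext0]
    simp only [Bool.toNat_true, if_pos rfl, zero_add]
    rw [binom_succ, PMF.map_bind]
    have h2 : PMF.bernoulli (2⁻¹ : ℝ≥0∞).toNNReal (pnn half_le_one) =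
        PMF.bernoulli 2⁻¹ (by norm_num) := by
      congr 1; simp [ENNReal.toNNReal_ofNat]
    rw [h2]
    refine congrArg _ (funext fun y => ?_)
    rw [PMF.map_comp, PMF.map_comp]
    refine congrArg _ (funext fun B => ?_)
    simp only [Function.comp_apply, if_true]
    exact congrArg PMF.pure (by omega)

noncomputable def rrg (hp : p ≤ 1) (a : Bool) : PMF Bool :=
  (PMF.bernoulli p.toNNReal (pnn hp)).bind fun b =>
    if b then PMF.bernoulli 2⁻¹ (by norm_num) else PMF.pure a

lemma main_ind (n : ℕ) : ∀ (x : Fin n → Bool),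
    (Hdist hp n).bind (fun H => CH n H x) =
      (indep n fun i => rrg hp (x i)).map (fun l => l.count true) := by
  induction n with
  | zero =>
    intro x
    have hCH : ∀ H : Finset (Fin 0), CH 0 H x = PMF.pure 0 := by
      intro H
      have hH : H = (∅ : Finset (Fin 0)) := Subsingleton.elim _ _
      subst hH
      rw [CH, Finset.card_empty, binom_zero, PMF.pure_map]
      have : sumOutside (∅ : Finset (Fin 0)) x = 0 := by
        simp [sumOutside]
      rw [this]
    simp only [hCH, PMF.bind_const, indep, PMF.pure_map, List.count_nil]
  | succ n IH' =>
    intro x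
    have IH := IH' (fun i => x i.succ)
    rw [hdist_succ hp n, PMF.bind_bind]
    conv_rhs => rw [indep]
    rw [PMF.map_bind, rrg, PMF.bind_bind]
    refine congrArg _ (funext fun b => ?_)
    rw [PMF.bind_map]
    have hcomp : ((fun H => CH (n+1) H x) ∘ ext0 b) = fun H => CH (n+1) (ext0 b H) x := rfl
    rw [hcomp]
    simp only [CH_ext0]
    rw [PMF.bind_comm]
    refine congrArg _ (funext fun y => ?_)
    rw [← PMF.map_bind, IH, PMF.map_bind, PMF.map_comp]
    simp only [PMF.pure_map, PMF.bind_pure_comp]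
    refine congrArg (fun f => PMF.map f _) (funext fun ys => ?_)
    simp only [Function.comp_apply, List.count_cons]
    cases y <;> simp [Nat.add_comm]

lemma cmech_eq (n : ℕ) (lam : ℝ) (x : Fin n → Bool) :
    Cmech n lam x =
      (indep n fun i => rr n lam (x i)).map (fun l => l.count true) := by
  have h1 : Cmech n lam x =
      (Hdist (p := min (ENNReal.ofReal (lam / n)) 1) (min_le_right _ _) n).bind
        fun H => CH n H x := by
    rw [Cmech, ← hdist_eq, PMF.bind_bind]
    rfl
  rw [h1, main_ind]
  have hq : (min (ENNReal.ofReal (lam / n)) 1).toNNReal = min (Real.toNNReal (lam / n)) 1 := by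
    rw [ENNReal.ofReal, ← ENNReal.coe_one, ← ENNReal.coe_min, ENNReal.toNNReal_coe]
  simp only [rrg, rr, hq]

def repMS (n k : ℕ) : Multiset Bool :=
  Multiset.replicate k true + Multiset.replicate (n - k) false

lemma shuffleBit_eq (n : ℕ) (lam : ℝ) (x : Fin n → Bool) :
    shuffleBit n lam x = (Cmech n lam x).map (repMS n) := by
  rw [shuffleBit, cmech_eq]
  conv_rhs => rw [PMF.map_comp]
  show PMF.map id ((indep n fun i => rr n lam (x i)).bind fun a =>
      PMF.pure ((a : List Bool) : Multiset Bool)) = _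
  rw [PMF.map_id]
  show PMF.map (fun a : List Bool => (a : Multiset Bool)) (indep n fun i => rr n lam (x i)) = _
  refine pmf_map_congr _ _ _ fun l hl => ?_
  have hlen := indep_length n _ l hl
  rw [bool_list_eq l, hlen]
  rfl


end Aux

/-- if `C_λ` is `(ε,δ)`-DP then the shuffled bit-sum mechanism
`Π_{n,λ}` is `(ε,δ)`-DP. -/
theorem stmt1 (n : ℕ) (lam : ℝ) (hlam0 : 0 < lam) (hlamn : lam < n) (eps del : ℝ)
    (hC : DPFor Neighbor (Cmech n lam) eps del) :
    DPFor Neighbor (shuffleBit n lam) eps del := by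
  intro x x' hnb T
  rw [shuffleBit_eq, shuffleBit_eq, PMF.toOuterMeasure_map_apply, PMF.toOuterMeasure_map_apply]
  exact hC x x' hnb (repMS n ⁻¹' T)

end ShuffledDP
end
end

section
/- Let R : 𝒳 → PMF(𝒴) be a local randomizer and n ∈ ℕ, and suppose the one-message shuffled mechanism Π_R on datasets of size n is (ε_S, δ_S)-differentially private. Then R itself is (ε_S + ln n, δ_S)-differentially private: for all x, x' ∈ 𝒳 and all sets Y₀ ⊆ 𝒴, Pr[R(x) ∈ Y₀] ≤ n·e^{ε_S}·Pr[R(x') ∈ Y₀] + δ_S. -/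
open scoped ENNReal Classical

noncomputable section

namespace ShuffledDP

universe u v w

lemma toOM_le_one {α : Type u} (p : PMF α) (s : Set α) : p.toOuterMeasure s ≤ 1 := by
  refine le_trans (p.toOuterMeasure.mono (Set.subset_univ s)) ?_
  exact le_of_eq ((PMF.toOuterMeasure_apply_eq_one_iff p Set.univ).mpr (Set.subset_univ _))

lemma indep_union_bound {𝒴 : Type v} (p : PMF 𝒴) (Y₀ : Set 𝒴) :
    ∀ n, (indep n fun _ : Fin n => p).toOuterMeasure {l | ∃ y ∈ l, y ∈ Y₀} ≤
      (n : ℝ≥0∞) * p.toOuterMeasure Y₀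
  | 0 => by
    rw [indep, PMF.toOuterMeasure_pure_apply]
    simp
  | (n + 1) => by
    rw [indep, PMF.toOuterMeasure_bind_apply]
    have key : ∀ y : 𝒴,
        ((indep n fun _ : Fin n => p).bind fun ys => PMF.pure (y :: ys)).toOuterMeasure
          {l | ∃ z ∈ l, z ∈ Y₀} ≤
        (if y ∈ Y₀ then 1 else 0) +
          (indep n fun _ : Fin n => p).toOuterMeasure {l | ∃ z ∈ l, z ∈ Y₀} := by
      intro y
      by_cases hy : y ∈ Y₀
      · simp only [hy, if_true]
        exact le_add_right (toOM_le_one _ _)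
      · simp only [hy, if_false, zero_add]
        rw [show ((indep n fun _ : Fin n => p).bind fun ys => PMF.pure (y :: ys)) =
            (indep n fun _ : Fin n => p).map (y :: ·) from rfl,
          PMF.toOuterMeasure_map_apply]
        refine (indep n fun _ : Fin n => p).toOuterMeasure.mono ?_
        intro l hl
        rcases hl with ⟨z, hz, hzY⟩
        rcases List.mem_cons.mp hz with h | h
        · exact absurd (h ▸ hzY) hy
        · exact ⟨z, h, hzY⟩
    calc ∑' y, p y * ((indep n fun _ : Fin n => p).bind fun ys => PMF.pure (y :: ys)).toOuterMeasure
            {l | ∃ z ∈ l, z ∈ Y₀}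
        ≤ ∑' y, p y * ((if y ∈ Y₀ then 1 else 0) +
            (indep n fun _ : Fin n => p).toOuterMeasure {l | ∃ z ∈ l, z ∈ Y₀}) := by
          exact ENNReal.tsum_le_tsum fun y => mul_le_mul_right (key y) _
      _ = (∑' y, p y * (if y ∈ Y₀ then 1 else 0)) +
            (∑' y, p y) * (indep n fun _ : Fin n => p).toOuterMeasure {l | ∃ z ∈ l, z ∈ Y₀} := by
          rw [← ENNReal.tsum_mul_right, ← ENNReal.tsum_add]
          simp [mul_add]
      _ ≤ p.toOuterMeasure Y₀ + (n : ℝ≥0∞) * p.toOuterMeasure Y₀ := by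
          have h1 : (∑' y, p y * (if y ∈ Y₀ then 1 else 0)) = p.toOuterMeasure Y₀ := by
            rw [PMF.toOuterMeasure_apply]
            exact tsum_congr fun y => by by_cases hy : y ∈ Y₀ <;> simp [Set.indicator, hy]
          rw [h1, p.tsum_coe, one_mul]
          exact add_le_add le_rfl (indep_union_bound p Y₀ n)
      _ = ((n : ℕ) + 1 : ℝ≥0∞) * p.toOuterMeasure Y₀ := by ring
      _ = ((n + 1 : ℕ) : ℝ≥0∞) * p.toOuterMeasure Y₀ := by push_cast; ring

lemma indep_first_ge {𝒴 : Type v} (n : ℕ) (f : Fin (n + 1) → PMF 𝒴) (Y₀ : Set 𝒴) :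
    (f 0).toOuterMeasure Y₀ ≤
      (indep (n + 1) f).toOuterMeasure {l | ∃ y ∈ l, y ∈ Y₀} := by
  rw [indep, PMF.toOuterMeasure_bind_apply, PMF.toOuterMeasure_apply]
  refine ENNReal.tsum_le_tsum fun y => ?_
  by_cases hy : y ∈ Y₀
  · simp only [Set.indicator, hy, if_true]
    conv_lhs => rw [← mul_one (f 0 y)]
    refine mul_le_mul_right ?_ _
    refine ge_of_eq ((PMF.toOuterMeasure_apply_eq_one_iff _ _).mpr ?_)
    intro l hl
    simp only [PMF.support_bind, PMF.support_pure, Set.mem_iUnion, Set.mem_singleton_iff] at hl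
    obtain ⟨ys, -, rfl⟩ := hl
    exact ⟨y, List.mem_cons_self (a := y) (l := ys), hy⟩
  · simp [Set.indicator, hy]

lemma map_coe_eq {𝒴 : Type v} (p : PMF (List 𝒴)) :
    (p.map fun l => (l : Multiset 𝒴)) = PMF.map (fun l : List 𝒴 => ↑l) p := by
  show PMF.map (fun l : Multiset 𝒴 => l) (PMF.bind p fun a => PMF.pure (↑a : Multiset 𝒴)) = _
  rw [show (fun l : Multiset 𝒴 => l) = id from rfl, PMF.map_id]
  rfl

/-- if the one-message shuffled mechanism `Π_R` on datasets of size
`n ≥ 1` is `(ε_S, δ_S)`-DP, then `R` itself is `(ε_S + ln n, δ_S)`-DP: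
`Pr[R(x) ∈ Y₀] ≤ n e^{ε_S} Pr[R(x') ∈ Y₀] + δ_S`. -/
theorem stmt15 {𝒳 : Type u} {𝒴 : Type v} (R : 𝒳 → PMF 𝒴) (n : ℕ) (hn : 1 ≤ n)
    (epsS delS : ℝ) (hdp : DPFor Neighbor (shuffle1 n R) epsS delS) :
    ∀ x x' : 𝒳, ∀ Y₀ : Set 𝒴,
      (R x).toOuterMeasure Y₀ ≤
        (n : ℝ≥0∞) * ENNReal.ofReal (Real.exp epsS) * (R x').toOuterMeasure Y₀ +
          ENNReal.ofReal delS := by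
  intro x x' Y₀
  obtain ⟨m, rfl⟩ : ∃ m, n = m + 1 := ⟨n - 1, (Nat.succ_pred_eq_of_pos hn).symm⟩
  set X : Fin (m + 1) → 𝒳 := fun i => if i = 0 then x else x' with hX
  set X' : Fin (m + 1) → 𝒳 := fun _ => x' with hX'
  have hnb : Neighbor X X' := ⟨0, fun i hi => by simp [hX, hX', hi]⟩
  set T : Set (Multiset 𝒴) := {ms | ∃ y ∈ ms, y ∈ Y₀} with hT
  have hpre : ((fun l : List 𝒴 => (l : Multiset 𝒴)) ⁻¹' T) = {l | ∃ y ∈ l, y ∈ Y₀} := by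
    ext l; simp [hT]
  have h1 : (R x).toOuterMeasure Y₀ ≤ (shuffle1 (m + 1) R X).toOuterMeasure T := by
    rw [shuffle1, map_coe_eq, PMF.toOuterMeasure_map_apply, hpre]
    have h := indep_first_ge m (fun i => R (X i)) Y₀
    simpa [hX] using h
  have h2 : (shuffle1 (m + 1) R X').toOuterMeasure T ≤
      ((m + 1 : ℕ) : ℝ≥0∞) * (R x').toOuterMeasure Y₀ := by
    rw [shuffle1, map_coe_eq, PMF.toOuterMeasure_map_apply, hpre]
    exact indep_union_bound (R x') Y₀ (m + 1)
  calc (R x).toOuterMeasure Y₀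
      ≤ (shuffle1 (m + 1) R X).toOuterMeasure T := h1
    _ ≤ ENNReal.ofReal (Real.exp epsS) * (shuffle1 (m + 1) R X').toOuterMeasure T +
          ENNReal.ofReal delS := hdp X X' hnb T
    _ ≤ ENNReal.ofReal (Real.exp epsS) * (((m + 1 : ℕ) : ℝ≥0∞) * (R x').toOuterMeasure Y₀) +
          ENNReal.ofReal delS := add_le_add_left (mul_le_mul_right h2 _) _
    _ = ((m + 1 : ℕ) : ℝ≥0∞) * ENNReal.ofReal (Real.exp epsS) * (R x').toOuterMeasure Y₀ +
          ENNReal.ofReal delS := by ring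

end ShuffledDP
end
end
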